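/- If p₁ and p₂ are distinct odd primes with τ(p₁) ≠ 0 and τ(p₂) ≠ 0, then 2τ(p₁²)/τ(p₁)² ≠ 2τ(p₂²)/τ(p₂)². Equivalently, the map p ↦ p¹¹/τ(p)² is injective on odd primes with τ(p) ≠ 0. -/

import Mathlib

/-- The rationals `2τ(p²)/τ(p)²` are distinct for distinct odd primes `p` with `τ(p) ≠ 0`. -/
theorem tau_ratio_injective (τ : ℕ → ℤ)
    (hp2 : ∀ p : ℕ, p.Prime → τ (p ^ 2) = (τ p) ^ 2 - (p : ℤ) ^ 11)
    (hDeligne : ∀ p : ℕ, p.Prime → (τ p) ^ 2 ≤ 4 * (p : ℤ) ^ 11)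
    (hτ3 : τ 3 = 252) :
    ∀ p₁ p₂ : ℕ, p₁.Prime → p₂.Prime → Odd p₁ → Odd p₂ → p₁ ≠ p₂ →
      τ p₁ ≠ 0 → τ p₂ ≠ 0 →
      2 * (τ (p₁ ^ 2) : ℚ) / (τ p₁ : ℚ) ^ 2 ≠ 2 * (τ (p₂ ^ 2) : ℚ) / (τ p₂ : ℚ) ^ 2 := by
  intro p₁ p₂ h1 h2 _ _ hne ht1 ht2 heq
  rw [hp2 p₁ h1, hp2 p₂ h2] at heq
  have hq1 : (τ p₁ : ℚ) ≠ 0 := by exact_mod_cast ht1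
  have hq2 : (τ p₂ : ℚ) ≠ 0 := by exact_mod_cast ht2
  have key : (p₁ : ℤ) ^ 11 * (τ p₂) ^ 2 = (p₂ : ℤ) ^ 11 * (τ p₁) ^ 2 := by
    have : ((p₁ : ℤ) ^ 11 * (τ p₂) ^ 2 : ℚ) = ((p₂ : ℤ) ^ 11 * (τ p₁) ^ 2 : ℚ) := by
      field_simp at heq
      push_cast at heq ⊢
      linarith
    exact_mod_cast this
  have hN : p₁ ^ 11 * (τ p₂).natAbs ^ 2 = p₂ ^ 11 * (τ p₁).natAbs ^ 2 := by
    have := congrArg Int.natAbs key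
    simpa [Int.natAbs_mul, Int.natAbs_pow] using this
  have ha1 : (τ p₁).natAbs ≠ 0 := Int.natAbs_ne_zero.mpr ht1
  have ha2 : (τ p₂).natAbs ≠ 0 := Int.natAbs_ne_zero.mpr ht2
  have hF := congrArg (fun n => n.factorization p₁) hN
  simp only [Nat.factorization_mul (pow_ne_zero _ h1.ne_zero) (pow_ne_zero _ ha2),
    Nat.factorization_mul (pow_ne_zero _ h2.ne_zero) (pow_ne_zero _ ha1),
    Nat.factorization_pow, Finsupp.coe_add, Finsupp.coe_smul, Pi.add_apply,
    Pi.smul_apply, smul_eq_mul, h1.factorization, h2.factorization,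
    Finsupp.single_apply, if_pos rfl, if_neg (Ne.symm hne), if_true] at hF
  omega
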